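/- Let A be an n×n real matrix such that there exists a positive diagonal matrix D₀ with Sym(D₀A) := (D₀A + AᵀD₀)/2 negative definite (A is diagonally stable). If θ ∈ (0, π/2) satisfies tan θ > ‖Skew(D₀A)‖ · ‖(Sym(D₀A))^{-1}‖, then the matrix W(A, D₀) = [[2 sinθ Sym(D₀A), 2 cosθ Skew(D₀A)],[2 cosθ Skew(D₀A)ᵀ, 2 sinθ Sym(D₀A)]] is negative definite. -/

import Mathlib

open Real Matrix

/-- The operator (spectral) norm of a real matrix, induced by the Euclidean norm. -/
noncomputable def opNorm {n : ℕ} (A : Matrix (Fin n) (Fin n) ℝ) : ℝ :=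
  ‖Matrix.toEuclideanCLM (𝕜 := ℝ) (n := Fin n) A‖

/-- Symmetric part of a matrix. -/
noncomputable def symPart {n : ℕ} (M : Matrix (Fin n) (Fin n) ℝ) :
    Matrix (Fin n) (Fin n) ℝ := (2 : ℝ)⁻¹ • (M + Mᵀ)

/-- Skew-symmetric part of a matrix. -/
noncomputable def skewPart {n : ℕ} (M : Matrix (Fin n) (Fin n) ℝ) :
    Matrix (Fin n) (Fin n) ℝ := (2 : ℝ)⁻¹ • (M - Mᵀ)

namespace SectorAux

variable {n : ℕ}

noncomputable def en (x : Fin n → ℝ) : ℝ := ‖(WithLp.equiv 2 (Fin n → ℝ)).symm x‖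

lemma en_nonneg (x : Fin n → ℝ) : 0 ≤ en x := norm_nonneg _

lemma en_sq (x : Fin n → ℝ) : en x ^ 2 = x ⬝ᵥ x := by
  rw [en, ← real_inner_self_eq_norm_sq]
  exact (show _ = x ⬝ᵥ star x from rfl).trans (by rw [star_trivial])

lemma en_pos {x : Fin n → ℝ} (hx : x ≠ 0) : 0 < en x := by
  rcases lt_or_eq_of_le (en_nonneg x) with h | h
  · exact h
  · exfalso
    apply hx
    have : x ⬝ᵥ x = 0 := by rw [← en_sq, ← h]; ring
    exact dotProduct_self_eq_zero.mp this

lemma dot_mulVec_le (M : Matrix (Fin n) (Fin n) ℝ) (x y : Fin n → ℝ) :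
    x ⬝ᵥ M *ᵥ y ≤ opNorm M * (en x * en y) := by
  have h1 : x ⬝ᵥ M *ᵥ y = @inner ℝ _ _ ((WithLp.equiv 2 (Fin n → ℝ)).symm x)
      ((Matrix.toEuclideanCLM (𝕜 := ℝ) M) ((WithLp.equiv 2 (Fin n → ℝ)).symm y)) := by
    change x ⬝ᵥ M *ᵥ y = (M *ᵥ y) ⬝ᵥ star x
    rw [star_trivial, dotProduct_comm]
  rw [h1]
  refine le_trans (real_inner_le_norm _ _) ?_
  have h3 := (Matrix.toEuclideanCLM (𝕜 := ℝ) M).le_opNorm ((WithLp.equiv 2 (Fin n → ℝ)).symm y)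
  rw [opNorm, en, en]
  nlinarith [h3, norm_nonneg ((WithLp.equiv 2 (Fin n → ℝ)).symm x),
    norm_nonneg ((WithLp.equiv 2 (Fin n → ℝ)).symm y),
    norm_nonneg (Matrix.toEuclideanCLM (𝕜 := ℝ) M)]

lemma cs {P : Matrix (Fin n) (Fin n) ℝ} (hP : P.PosSemidef) (x y : Fin n → ℝ) :
    (x ⬝ᵥ P *ᵥ y) ^ 2 ≤ (x ⬝ᵥ P *ᵥ x) * (y ⬝ᵥ P *ᵥ y) := by
  obtain ⟨B, rfl⟩ : ∃ B : Matrix (Fin n) (Fin n) ℝ, P = Bᴴ * B := by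
    open scoped MatrixOrder Matrix.Norms.L2Operator in
    exact CStarAlgebra.nonneg_iff_eq_star_mul_self.mp hP.nonneg
  have key : ∀ a b : Fin n → ℝ, a ⬝ᵥ (Bᴴ * B) *ᵥ b = (B *ᵥ a) ⬝ᵥ (B *ᵥ b) := by
    intro a b
    rw [← Matrix.mulVec_mulVec, Matrix.dotProduct_mulVec,
      Matrix.conjTranspose_eq_transpose_of_trivial, Matrix.vecMul_transpose]
  rw [key, key, key]
  have := Finset.sum_mul_sq_le_sq_mul_sq Finset.univ (B *ᵥ x) (B *ᵥ y)
  simpa [dotProduct, sq] using this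

lemma dot_nonneg (x : Fin n → ℝ) : 0 ≤ x ⬝ᵥ x := by rw [← en_sq]; positivity

lemma le_dot_posdef {P : Matrix (Fin n) (Fin n) ℝ} (hP : P.PosDef) (x : Fin n → ℝ) :
    x ⬝ᵥ x ≤ opNorm P⁻¹ * (x ⬝ᵥ P *ᵥ x) := by
  rcases eq_or_ne x 0 with rfl | hx
  · simp
  · have hxx : 0 < x ⬝ᵥ x :=
      lt_of_le_of_ne (dot_nonneg x) (fun h => hx (dotProduct_self_eq_zero.mp h.symm))
    have hdet : IsUnit P.det := Matrix.isUnit_iff_isUnit_det _ |>.mp hP.isUnit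
    have hPy : P *ᵥ (P⁻¹ *ᵥ x) = x := by
      rw [Matrix.mulVec_mulVec, Matrix.mul_nonsing_inv _ hdet, Matrix.one_mulVec]
    have h3 := cs hP.posSemidef x (P⁻¹ *ᵥ x)
    rw [hPy] at h3
    have h2 : (P⁻¹ *ᵥ x) ⬝ᵥ x = x ⬝ᵥ P⁻¹ *ᵥ x := dotProduct_comm _ _
    rw [h2] at h3
    have h4 : x ⬝ᵥ P⁻¹ *ᵥ x ≤ opNorm P⁻¹ * (x ⬝ᵥ x) := by
      have := dot_mulVec_le P⁻¹ x x
      rw [← en_sq x]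
      nlinarith [en_nonneg x]
    have h5 : 0 ≤ x ⬝ᵥ P *ᵥ x := by simpa using hP.posSemidef.dotProduct_mulVec_nonneg x
    nlinarith [h3, h4, h5, hxx]

end SectorAux


theorem diagonally_stable_implies_sector_stable (n : ℕ) (A : Matrix (Fin n) (Fin n) ℝ)
    (d₀ : Fin n → ℝ) (hd₀ : ∀ i, 0 < d₀ i)
    (hSym : (-(symPart (Matrix.diagonal d₀ * A))).PosDef)
    (θ : ℝ) (hθ₀ : 0 < θ) (hθ : θ < π / 2)
    (htan : Real.tan θ >
      opNorm (skewPart (Matrix.diagonal d₀ * A)) *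
        opNorm (symPart (Matrix.diagonal d₀ * A))⁻¹) :
    (-(Matrix.fromBlocks
        ((2 * Real.sin θ) • symPart (Matrix.diagonal d₀ * A))
        ((2 * Real.cos θ) • skewPart (Matrix.diagonal d₀ * A))
        ((2 * Real.cos θ) • (skewPart (Matrix.diagonal d₀ * A))ᵀ)
        ((2 * Real.sin θ) • symPart (Matrix.diagonal d₀ * A)))).PosDef := by
  set S := symPart (Matrix.diagonal d₀ * A) with hSdef
  set K := skewPart (Matrix.diagonal d₀ * A) with hKdef
  have hST : Sᵀ = S := by
    rw [hSdef]
    unfold symPart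
    rw [Matrix.transpose_smul, Matrix.transpose_add, Matrix.transpose_transpose, add_comm]
  have hcos : 0 < Real.cos θ :=
    Real.cos_pos_of_mem_Ioo ⟨by linarith [Real.pi_pos], hθ⟩
  have hsin : 0 < Real.sin θ := Real.sin_pos_of_pos_of_lt_pi hθ₀ (by linarith [Real.pi_pos])
  have hdetS : IsUnit (-S).det := (Matrix.isUnit_iff_isUnit_det _).mp hSym.isUnit
  have hSinv : S⁻¹ = -(-S)⁻¹ := by
    apply Matrix.inv_eq_right_inv
    have h1 : S * -(-S)⁻¹ = (-S) * (-S)⁻¹ := by rw [mul_neg, ← neg_mul]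
    rw [h1, Matrix.mul_nonsing_inv _ hdetS]
  have hopS : opNorm S⁻¹ = opNorm (-S)⁻¹ := by
    rw [hSinv, opNorm, opNorm, map_neg, norm_neg]
  set cP := opNorm (-S)⁻¹ with hcPdef
  set k := opNorm K with hkdef
  have hk : 0 ≤ k := norm_nonneg _
  have htan' : Real.cos θ * (k * cP) < Real.sin θ := by
    rw [Real.tan_eq_sin_div_cos, hopS, gt_iff_lt, lt_div_iff₀ hcos] at htan
    linarith
  refine Matrix.PosDef.of_dotProduct_mulVec_pos ?_ ?_
  · rw [Matrix.IsHermitian, Matrix.conjTranspose_eq_transpose_of_trivial, Matrix.transpose_neg,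
      Matrix.fromBlocks_transpose]
    simp only [Matrix.transpose_smul, Matrix.transpose_transpose, hST]
  · intro z hz
    obtain ⟨u, v, rfl⟩ : ∃ u v, z = Sum.elim u v :=
      ⟨z ∘ Sum.inl, z ∘ Sum.inr, (Sum.elim_comp_inl_inr z).symm⟩
    have hn : n ≠ 0 := by
      rintro rfl
      exact hz (funext fun i => by
        cases i with
        | inl a => exact a.elim0
        | inr a => exact a.elim0)
    haveI : Nonempty (Fin n) := ⟨⟨0, Nat.pos_of_ne_zero hn⟩⟩
    have hcP : 0 < cP := by
      rw [hcPdef]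
      have hne : (-S)⁻¹ ≠ 0 := by
        intro h0
        have h1 : (-S) * (-S)⁻¹ = 1 := Matrix.mul_nonsing_inv _ hdetS
        rw [h0, mul_zero] at h1
        exact zero_ne_one h1
      rw [opNorm]
      rw [norm_pos_iff]
      intro h0
      exact hne (by simpa using congrArg (Matrix.toEuclideanCLM (𝕜 := ℝ) (n := Fin n)).symm h0)
    have e1 : u ⬝ᵥ S *ᵥ u = -(u ⬝ᵥ (-S) *ᵥ u) := by
      rw [Matrix.neg_mulVec, dotProduct_neg, neg_neg]
    have e2 : v ⬝ᵥ S *ᵥ v = -(v ⬝ᵥ (-S) *ᵥ v) := by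
      rw [Matrix.neg_mulVec, dotProduct_neg, neg_neg]
    have e3 : v ⬝ᵥ Kᵀ *ᵥ u = u ⬝ᵥ K *ᵥ v := by
      rw [Matrix.dotProduct_mulVec, Matrix.vecMul_transpose, dotProduct_comm]
    rw [star_trivial, Matrix.neg_mulVec, dotProduct_neg, Matrix.fromBlocks_mulVec]
    simp only [Sum.elim_comp_inl, Sum.elim_comp_inr]
    rw [sumElim_dotProduct_sumElim, dotProduct_add, dotProduct_add,
      Matrix.smul_mulVec, Matrix.smul_mulVec, Matrix.smul_mulVec,
      Matrix.smul_mulVec, dotProduct_smul, dotProduct_smul,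
      dotProduct_smul, dotProduct_smul]
    rw [e3]
    rw [e1, e2]
    simp only [smul_eq_mul]
    -- bounds
    have hb1 := SectorAux.le_dot_posdef hSym u
    have hb2 := SectorAux.le_dot_posdef hSym v
    rw [← SectorAux.en_sq, ← hcPdef] at hb1 hb2
    have hq := SectorAux.dot_mulVec_le K u v
    rw [← hkdef] at hq
    have h2ab : (4 * Real.cos θ * cP) * (k * (SectorAux.en u * SectorAux.en v)) ≤
        (2 * Real.cos θ * cP * k) * (SectorAux.en u ^ 2 + SectorAux.en v ^ 2) := by
      nlinarith [sq_nonneg (SectorAux.en u - SectorAux.en v), hcos.le, hcP.le, hk,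
        mul_nonneg (mul_nonneg (mul_nonneg (by norm_num : (0:ℝ) ≤ 2) hcos.le) hcP.le) hk]
    have hp1n : 0 ≤ u ⬝ᵥ (-S) *ᵥ u := by simpa using hSym.posSemidef.dotProduct_mulVec_nonneg u
    have hp2n : 0 ≤ v ⬝ᵥ (-S) *ᵥ v := by simpa using hSym.posSemidef.dotProduct_mulVec_nonneg v
    have ha := SectorAux.en_nonneg u
    have hbn := SectorAux.en_nonneg v
    have huv : u ≠ 0 ∨ v ≠ 0 := by
      by_contra h
      push_neg at h
      exact hz (by rw [h.1, h.2]; ext i; cases i <;> rfl)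
    have hsum : 0 < SectorAux.en u ^ 2 + SectorAux.en v ^ 2 := by
      rcases huv with h | h
      · exact add_pos_of_pos_of_nonneg (pow_pos (SectorAux.en_pos h) 2) (sq_nonneg _)
      · exact add_pos_of_nonneg_of_pos (sq_nonneg _) (pow_pos (SectorAux.en_pos h) 2)
    nlinarith [mul_le_mul_of_nonneg_left hb1 (le_of_lt hsin),
      mul_le_mul_of_nonneg_left hb2 (le_of_lt hsin),
      mul_le_mul_of_nonneg_left hq (by positivity : (0:ℝ) ≤ 4 * Real.cos θ * cP),
      mul_lt_mul_of_pos_right htan' hsum, h2ab,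
      mul_nonneg ha hbn, hcP, hcos, hsin, hk, hp1n, hp2n]
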